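/- arXiv:0705.2503 — 5 statements merged into one kernel-verified Lean document; each statement's English description precedes it below -/
import Mathlib

section
/- If 𝒯' ⊆ 𝒯 is a minimal r-test set of S (i.e., 𝒯' is an r-test set but no proper subfamily of 𝒯' is an r-test set), then |𝒯'| ≤ r·(n − 1). -/
open Finset

/-- The set of item pairs: 2-element subsets of the item set `S` (here the whole type `α`). -/
def itemPairs (α : Type*) [Fintype α] [DecidableEq α] : Finset (Finset α) :=
  Finset.univ.filter fun a => a.card = 2

/-- `⊥(a, F)`: the number of tests in the family `F` that differentiate the item pair `a`,
i.e. the tests `T` with `|T ∩ a| = 1`. -/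
def diffBy {α : Type*} [DecidableEq α] (a : Finset α) (F : Finset (Finset α)) : ℕ :=
  (F.filter fun T => (T ∩ a).card = 1).card

/-- `F` is an `r`-test set for the collection `𝒯`: `F ⊆ 𝒯` and every item pair is
differentiated by at least `r` tests of `F`. -/
def IsRTestSet {α : Type*} [Fintype α] [DecidableEq α]
    (r : ℕ) (𝒯 F : Finset (Finset α)) : Prop :=
  F ⊆ 𝒯 ∧ ∀ a ∈ itemPairs α, r ≤ diffBy a F

/-- The differentiation measure `#(T̄) = ∑_a max (r - ⊥(a,T̄), 0)` (truncated subtraction). -/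
def dmeasure {α : Type*} [Fintype α] [DecidableEq α]
    (r : ℕ) (F : Finset (Finset α)) : ℕ :=
  ∑ a ∈ itemPairs α, (r - diffBy a F)

/-- A run of the set cover greedy algorithm SGA: a sequence of distinct tests from `𝒯`,
each chosen greedily to minimize the differentiation measure of the selected family,
selections continue while the measure is positive, and the final measure is `0`. -/
structure SGARun {α : Type*} [Fintype α] [DecidableEq α]
    (r : ℕ) (𝒯 : Finset (Finset α)) (L : List (Finset α)) : Prop where
  nodup : L.Nodup
  mem : ∀ T ∈ L, T ∈ 𝒯
  greedy : ∀ i : Fin L.length, ∀ T ∈ 𝒯, T ∉ (L.take i).toFinset →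
      dmeasure r (insert (L.get i) (L.take i).toFinset) ≤
        dmeasure r (insert T (L.take i).toFinset)
  pos : ∀ i < L.length, 0 < dmeasure r (L.take i).toFinset
  done : dmeasure r L.toFinset = 0


section Aux

open Module

variable {α : Type*} [Fintype α] [DecidableEq α]

lemma diffBy_mono (a : Finset α) {F₁ F₂ : Finset (Finset α)} (h : F₁ ⊆ F₂) :
    diffBy a F₁ ≤ diffBy a F₂ :=
  Finset.card_le_card (Finset.filter_subset_filter _ h)

lemma diffBy_sdiff_add (a : Finset α) {F'' F : Finset (Finset α)} (h : F'' ⊆ F) :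
    diffBy a F'' + diffBy a (F \ F'') = diffBy a F := by
  unfold diffBy
  rw [← Finset.card_union_of_disjoint (Finset.disjoint_filter_filter (Finset.disjoint_sdiff)),
    ← Finset.filter_union, Finset.union_sdiff_of_subset h]

/-- every r-test set contains a minimal one. -/
lemma exists_min (r : ℕ) (𝒯 : Finset (Finset α)) :
    ∀ F : Finset (Finset α), IsRTestSet r 𝒯 F →
      ∃ F'', F'' ⊆ F ∧ IsRTestSet r 𝒯 F'' ∧ ∀ G ⊂ F'', ¬ IsRTestSet r 𝒯 G := by
  intro F
  induction F using Finset.strongInductionOn with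
  | _ F ih =>
    intro hF
    by_cases h : ∃ F', F' ⊂ F ∧ IsRTestSet r 𝒯 F'
    · obtain ⟨F', hsub, hF'⟩ := h
      obtain ⟨F'', h1, h2, h3⟩ := ih F' hsub hF'
      exact ⟨F'', h1.trans hsub.subset, h2, h3⟩
    · exact ⟨F, Finset.Subset.rfl, hF, fun G hG hGt => h ⟨G, hG, hGt⟩⟩

/-- vector of a pair in (ZMod 2)^α. -/
private def pvec (a : Finset α) : α → ZMod 2 := fun i => if i ∈ a then 1 else 0

private lemma sum_pvec (T a : Finset α) : ∑ i ∈ T, pvec a i = ((T ∩ a).card : ZMod 2) := by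
  unfold pvec
  rw [Finset.sum_ite_mem]
  simp

/-- the sum functional. -/
private def sumf : (α → ZMod 2) →ₗ[ZMod 2] ZMod 2 := ∑ i : α, LinearMap.proj i

private lemma sumf_apply (v : α → ZMod 2) : sumf v = ∑ i : α, v i := by
  simp [sumf]

private lemma finrank_ker_sumf (hn : 1 ≤ Fintype.card α) :
    finrank (ZMod 2) (LinearMap.ker (sumf (α := α))) = Fintype.card α - 1 := by
  have hsurj : Function.Surjective (sumf (α := α)) := by
    obtain ⟨i₀⟩ := Fintype.card_pos_iff.mp hn
    intro c
    refine ⟨Pi.single i₀ c, ?_⟩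
    rw [sumf_apply, Finset.sum_pi_single']
    simp
  have hrange : LinearMap.range (sumf (α := α)) = ⊤ := LinearMap.range_eq_top.mpr hsurj
  have h := LinearMap.finrank_range_add_finrank_ker (sumf (α := α))
  rw [hrange, finrank_top, finrank_self, Module.finrank_fintype_fun_eq_card] at h
  omega

/-- key combinatorial lemma: if each test `T ∈ G` has a "private" pair `w T` (a pair
differentiated by `T` and by no other member of `G`), then `|G| ≤ n - 1`. -/
lemma card_le_of_private (hn : 2 ≤ Fintype.card α) (G : Finset (Finset α))
    (w : ∀ T ∈ G, Finset α)
    (hcard : ∀ T (hT : T ∈ G), (w T hT).card = 2)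
    (hcov : ∀ T (hT : T ∈ G), (T ∩ w T hT).card = 1)
    (hpriv : ∀ T (hT : T ∈ G), ∀ T' ∈ G, (T' ∩ w T hT).card = 1 → T' = T) :
    G.card ≤ Fintype.card α - 1 := by
  classical
  set u : {x // x ∈ G} → (α → ZMod 2) := fun T => pvec (w T.1 T.2) with hu
  have hker : ∀ T : {x // x ∈ G}, u T ∈ LinearMap.ker (sumf (α := α)) := by
    intro T
    rw [LinearMap.mem_ker, sumf_apply]
    have : ∑ i : α, u T i = ((Finset.univ ∩ w T.1 T.2).card : ZMod 2) := sum_pvec _ _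
    rw [this, Finset.univ_inter, hcard T.1 T.2]
    decide
  set u' : {x // x ∈ G} → LinearMap.ker (sumf (α := α)) :=
    fun T => ⟨u T, hker T⟩ with hu'
  have hindep : LinearIndependent (ZMod 2) u' := by
    apply LinearIndependent.of_comp (LinearMap.ker (sumf (α := α))).subtype
    have hcomp : (LinearMap.ker (sumf (α := α))).subtype ∘ u' = u := rfl
    rw [hcomp]
    rw [linearIndependent_iff']
    intro s g hsum j₀ hj₀
    -- apply the functional "sum over j₀.1"
    have heval : ∀ j ∈ s, ∑ i ∈ (j₀ : Finset α), (g j • u j) i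
        = g j * (((j₀ : Finset α) ∩ w j.1 j.2).card : ZMod 2) := by
      intro j hj
      simp only [Pi.smul_apply, smul_eq_mul, ← Finset.mul_sum]
      rw [hu]
      rw [sum_pvec]
    have happ : ∑ j ∈ s, g j * (((j₀ : Finset α) ∩ w j.1 j.2).card : ZMod 2) = 0 := by
      calc ∑ j ∈ s, g j * (((j₀ : Finset α) ∩ w j.1 j.2).card : ZMod 2)
          = ∑ j ∈ s, ∑ i ∈ (j₀ : Finset α), (g j • u j) i :=
            (Finset.sum_congr rfl heval).symm
        _ = ∑ i ∈ (j₀ : Finset α), ∑ j ∈ s, (g j • u j) i := Finset.sum_comm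
        _ = ∑ i ∈ (j₀ : Finset α), (∑ j ∈ s, g j • u j) i := by
            simp [Finset.sum_apply]
        _ = 0 := by rw [hsum]; simp
    rw [Finset.sum_eq_single j₀ ?_ ?_] at happ
    · rw [hcov j₀.1 j₀.2] at happ
      simpa using happ
    · intro j hj hne
      have hne' : ((j₀ : Finset α) ∩ w j.1 j.2).card ≠ 1 := by
        intro h1
        exact hne (Subtype.ext (hpriv j.1 j.2 j₀.1 j₀.2 h1).symm)
      have hle : ((j₀ : Finset α) ∩ w j.1 j.2).card ≤ 2 := by
        calc ((j₀ : Finset α) ∩ w j.1 j.2).card ≤ (w j.1 j.2).card :=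
              Finset.card_le_card (Finset.inter_subset_right)
          _ = 2 := hcard j.1 j.2
      have h02 : (((j₀ : Finset α) ∩ w j.1 j.2).card : ZMod 2) = 0 := by
        have hd : ((j₀ : Finset α) ∩ w j.1 j.2).card = 0 ∨
            ((j₀ : Finset α) ∩ w j.1 j.2).card = 2 := by omega
        rcases hd with h | h <;> rw [h] <;> decide
      rw [h02, mul_zero]
    · intro h; exact absurd hj₀ h
  have hfin : Fintype.card {x // x ∈ G} ≤ finrank (ZMod 2) (LinearMap.ker (sumf (α := α))) :=
    hindep.fintype_card_le_finrank
  rw [Fintype.card_coe, finrank_ker_sumf (by omega)] at hfin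
  exact hfin

lemma key (hn : 2 ≤ Fintype.card α) (𝒯 : Finset (Finset α)) :
    ∀ (r : ℕ) (F : Finset (Finset α)), IsRTestSet r 𝒯 F →
      (∀ F' ⊂ F, ¬ IsRTestSet r 𝒯 F') → F.card ≤ r * (Fintype.card α - 1) := by
  intro r
  induction r with
  | zero =>
    intro F hF hmin
    rcases Finset.eq_empty_or_nonempty F with h | h
    · simp [h]
    · exact absurd ⟨Finset.empty_subset _, fun a _ => Nat.zero_le _⟩
        (hmin ∅ (Finset.empty_ssubset.mpr h))
  | succ r ih =>
    intro F hF hmin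
    -- F is also an r-test set
    have hFr : IsRTestSet r 𝒯 F := ⟨hF.1, fun a ha => le_trans (Nat.le_succ r) (hF.2 a ha)⟩
    obtain ⟨F'', hsub, hF'', hF''min⟩ := exists_min r 𝒯 F hFr
    have hF''card : F''.card ≤ r * (Fintype.card α - 1) := ih F'' hF'' hF''min
    set G := F \ F'' with hG
    -- for each T in G, find a private pair
    have hwit : ∀ T ∈ G, ∃ a, a.card = 2 ∧ (T ∩ a).card = 1 ∧
        ∀ T' ∈ G, (T' ∩ a).card = 1 → T' = T := by
      intro T hTG
      have hTF : T ∈ F := (Finset.mem_sdiff.mp hTG).1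
      have herase : ¬ IsRTestSet (r + 1) 𝒯 (F.erase T) :=
        hmin (F.erase T) (Finset.erase_ssubset hTF)
      have hesub : F.erase T ⊆ 𝒯 := (Finset.erase_subset _ _).trans hF.1
      have herase' : ∃ a ∈ itemPairs α, diffBy a (F.erase T) < r + 1 := by
        by_contra hc
        push_neg at hc
        exact herase ⟨hesub, fun a ha => hc a ha⟩
      obtain ⟨a, ha, hlt⟩ := herase'
      have hacard : a.card = 2 := by
        simpa [itemPairs] using ha
      have haF : r + 1 ≤ diffBy a F := hF.2 a ha
      -- T differentiates a
      have hTa : (T ∩ a).card = 1 := by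
        by_contra hne
        have : diffBy a (F.erase T) = diffBy a F := by
          unfold diffBy
          rw [Finset.filter_erase, Finset.erase_eq_of_notMem]
          intro hmem
          exact hne (Finset.mem_filter.mp hmem).2
        omega
      -- diffBy a F = r + 1
      have hdle : diffBy a F ≤ diffBy a (F.erase T) + 1 := by
        unfold diffBy
        have hss : F.filter (fun T' => (T' ∩ a).card = 1) ⊆
            insert T ((F.erase T).filter (fun T' => (T' ∩ a).card = 1)) := by
          intro x hx
          rcases eq_or_ne x T with h | h
          · subst h; exact Finset.mem_insert_self _ _
          · exact Finset.mem_insert_of_mem (by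
              rw [Finset.filter_erase]
              exact Finset.mem_erase.mpr ⟨h, hx⟩)
        calc _ ≤ (insert T ((F.erase T).filter (fun T' => (T' ∩ a).card = 1))).card :=
              Finset.card_le_card hss
          _ ≤ _ + 1 := Finset.card_insert_le _ _
      have hdF : diffBy a F = r + 1 := by omega
      have hdF'' : r ≤ diffBy a F'' := hF''.2 a ha
      have hsplit : diffBy a F'' + diffBy a G = diffBy a F := diffBy_sdiff_add a hsub
      have hdG1 : diffBy a G ≤ 1 := by omega
      have hTfil : T ∈ G.filter (fun T' => (T' ∩ a).card = 1) :=
        Finset.mem_filter.mpr ⟨hTG, hTa⟩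
      refine ⟨a, hacard, hTa, ?_⟩
      intro T' hT' hT'a
      have hT'fil : T' ∈ G.filter (fun T'' => (T'' ∩ a).card = 1) :=
        Finset.mem_filter.mpr ⟨hT', hT'a⟩
      exact Finset.card_le_one.mp hdG1 T' hT'fil T hTfil
    choose w hw1 hw2 hw3 using hwit
    have hGcard : G.card ≤ Fintype.card α - 1 :=
      card_le_of_private hn G w hw1 hw2 hw3
    have : F.card = F''.card + G.card := by
      rw [hG, Finset.card_sdiff_of_subset hsub]
      have := Finset.card_le_card hsub
      omega
    calc F.card = F''.card + G.card := this
      _ ≤ r * (Fintype.card α - 1) + (Fintype.card α - 1) := Nat.add_le_add hF''card hGcard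
      _ = (r + 1) * (Fintype.card α - 1) := by ring

end Aux

/-- a minimal `r`-test set has at most `r·(n−1)` tests. -/
theorem stmt_1 {α : Type*} [Fintype α] [DecidableEq α]
    (r : ℕ) (hr : 1 ≤ r) (hn : 2 ≤ Fintype.card α)
    (𝒯 F : Finset (Finset α)) (hF : IsRTestSet r 𝒯 F)
    (hmin : ∀ F' ⊂ F, ¬ IsRTestSet r 𝒯 F') :
    F.card ≤ r * (Fintype.card α - 1) := by
  exact key hn 𝒯 r F hF hmin
end

section
/- Let 𝒯* ⊆ 𝒯 be an optimal r-test set (an r-test set of minimum cardinality) and let m* = |𝒯*|. Then the number of item pairs a with ⊥(a,𝒯*) = r (i.e., pairs differentiated by exactly r tests of 𝒯*) is at most 2·n·log₂(n)·(m*)^{r−1}. -/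
open Finset

set_option maxRecDepth 40000

/-- Hamming distance between Boolean vectors. -/
def hdistX {β : Type*} [Fintype β] (u w : β → Bool) : ℕ :=
  (Finset.univ.filter fun c => u c ≠ w c).card

/-- Number of ordered pairs of vectors in `A` at Hamming distance `1`. -/
def oDX {β : Type*} [Fintype β] (A : Finset (β → Bool)) : ℕ :=
  ((A ×ˢ A).filter fun p => hdistX p.1 p.2 = 1).card

lemma hdistX_self {β : Type*} [Fintype β] (u : β → Bool) : hdistX u u = 0 := by
  simp [hdistX]

lemma hdistX_eq_one_unique {β : Type*} [Fintype β] {u w : β → Bool} {c d : β}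
    (h : hdistX u w = 1) (hc : u c ≠ w c) (hd : d ≠ c) : u d = w d := by
  classical
  obtain ⟨x, hx⟩ := Finset.card_eq_one.mp h
  have hcx : c ∈ Finset.univ.filter fun c => u c ≠ w c := by simp [hc]
  rw [hx, Finset.mem_singleton] at hcx
  subst hcx
  by_contra hne
  have : d ∈ Finset.univ.filter fun c => u c ≠ w c := by simp [hne]
  rw [hx, Finset.mem_singleton] at this
  exact hd this

lemma key_ineq (a b : ℕ) (ha : 1 ≤ a) (hab : a ≤ b) :
    (a : ℝ) * Real.logb 2 a + b * Real.logb 2 b + a ≤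
      ((a : ℝ) + b) * Real.logb 2 ((a : ℝ) + b) := by
  have ha' : (1 : ℝ) ≤ a := by exact_mod_cast ha
  have hb' : (1 : ℝ) ≤ b := le_trans ha' (by exact_mod_cast hab)
  have hab' : (a : ℝ) ≤ b := by exact_mod_cast hab
  have h2a : (2 : ℝ) * a ≤ a + b := by linarith
  have h1 : (a : ℝ) * Real.logb 2 a + a = a * Real.logb 2 (2 * a) := by
    rw [Real.logb_mul (by norm_num) (by positivity), Real.logb_self_eq_one one_lt_two]
    ring
  have hle1 : Real.logb 2 (2 * (a : ℝ)) ≤ Real.logb 2 ((a : ℝ) + b) :=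
    Real.logb_le_logb_of_le one_lt_two (by positivity) h2a
  have hle2 : Real.logb 2 (b : ℝ) ≤ Real.logb 2 ((a : ℝ) + b) :=
    Real.logb_le_logb_of_le one_lt_two (by linarith) (by linarith)
  have e1 : (a : ℝ) * Real.logb 2 (2 * (a : ℝ)) ≤ a * Real.logb 2 ((a : ℝ) + b) :=
    mul_le_mul_of_nonneg_left hle1 (by positivity)
  have e2 : (b : ℝ) * Real.logb 2 (b : ℝ) ≤ b * Real.logb 2 ((a : ℝ) + b) :=
    mul_le_mul_of_nonneg_left hle2 (by positivity)
  have e3 : ((a : ℝ) + b) * Real.logb 2 ((a : ℝ) + b) =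
      a * Real.logb 2 ((a : ℝ) + b) + b * Real.logb 2 ((a : ℝ) + b) := by ring
  linarith

theorem hyper {β : Type*} [Fintype β] (A : Finset (β → Bool)) :
    (oDX A : ℝ) ≤ 2 * A.card * Real.logb 2 A.card := by
  classical
  induction A using Finset.strongInduction with
  | _ A IH =>
  by_cases hA : A.card ≤ 1
  · have hz : oDX A = 0 := by
      rw [oDX, Finset.card_eq_zero]
      rw [Finset.filter_eq_empty_iff]
      rintro ⟨u, w⟩ hp
      rw [Finset.mem_product] at hp
      have : u = w := Finset.card_le_one.mp hA _ hp.1 _ hp.2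
      subst this
      simp [hdistX_self]
    rw [hz]
    interval_cases h : A.card <;> simp
  · push_neg at hA
    obtain ⟨u, hu, w, hw, huw⟩ := Finset.one_lt_card.mp hA
    obtain ⟨c, hc⟩ := Function.ne_iff.mp huw
    set A0 := A.filter fun v => v c = false with hA0
    set A1 := A.filter fun v => v c = true with hA1
    have hcards : A0.card + A1.card = A.card := by
      have h1 : A1 = A.filter fun v => ¬ (v c = false) := by
        rw [hA1]; apply Finset.filter_congr; intros; simp
      rw [hA0, h1]
      exact Finset.card_filter_add_card_filter_not _
    have hne : A0.Nonempty ∧ A1.Nonempty := by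
      cases hu' : u c <;> cases hw' : w c
      · rw [hu', hw'] at hc; exact absurd rfl hc
      · exact ⟨⟨u, Finset.mem_filter.mpr ⟨hu, hu'⟩⟩, ⟨w, Finset.mem_filter.mpr ⟨hw, hw'⟩⟩⟩
      · exact ⟨⟨w, Finset.mem_filter.mpr ⟨hw, hw'⟩⟩, ⟨u, Finset.mem_filter.mpr ⟨hu, hu'⟩⟩⟩
      · rw [hu', hw'] at hc; exact absurd rfl hc
    obtain ⟨hne0, hne1⟩ := hne
    have hs0 : A0 ⊂ A := by
      refine ⟨Finset.filter_subset _ _, fun hsub => ?_⟩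
      obtain ⟨v, hv⟩ := hne1
      have h2 := Finset.mem_filter.mp (hsub (Finset.mem_filter.mp hv).1)
      have h3 := (Finset.mem_filter.mp hv).2
      rw [h3] at h2
      exact absurd h2.2 (by simp)
    have hs1 : A1 ⊂ A := by
      refine ⟨Finset.filter_subset _ _, fun hsub => ?_⟩
      obtain ⟨v, hv⟩ := hne0
      have h2 := Finset.mem_filter.mp (hsub (Finset.mem_filter.mp hv).1)
      have h3 := (Finset.mem_filter.mp hv).2
      rw [h3] at h2
      exact absurd h2.2 (by simp)
    -- decomposition of oDX A
    set S := ((A ×ˢ A).filter fun p => hdistX p.1 p.2 = 1) with hS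
    have hsplit : S.card = (S.filter fun p => p.1 c = false ∧ p.2 c = false).card
        + (S.filter fun p => p.1 c = false ∧ p.2 c = true).card
        + ((S.filter fun p => p.1 c = true ∧ p.2 c = false).card
        + (S.filter fun p => p.1 c = true ∧ p.2 c = true).card) := by
      have t1 := Finset.card_filter_add_card_filter_not (s := S)
        (p := fun p => p.1 c = false)
      have e1 : S.filter (fun p => ¬ p.1 c = false) = S.filter fun p => p.1 c = true := by
        apply Finset.filter_congr; intros; simp
      have t2 := Finset.card_filter_add_card_filter_not
        (s := S.filter fun p => p.1 c = false) (p := fun p => p.2 c = false)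
      have e2 : ((S.filter fun p => p.1 c = false).filter fun p => ¬ p.2 c = false)
          = (S.filter fun p => p.1 c = false).filter fun p => p.2 c = true := by
        apply Finset.filter_congr; intros; simp
      have t3 := Finset.card_filter_add_card_filter_not
        (s := S.filter fun p => p.1 c = true) (p := fun p => p.2 c = false)
      have e3 : ((S.filter fun p => p.1 c = true).filter fun p => ¬ p.2 c = false)
          = (S.filter fun p => p.1 c = true).filter fun p => p.2 c = true := by
        apply Finset.filter_congr; intros; simp
      have q1 : ((S.filter fun p => p.1 c = false).filter fun p => p.2 c = false)
          = S.filter fun p => p.1 c = false ∧ p.2 c = false := by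
        ext p; simp only [Finset.mem_filter]; tauto
      have q2 : ((S.filter fun p => p.1 c = false).filter fun p => p.2 c = true)
          = S.filter fun p => p.1 c = false ∧ p.2 c = true := by
        ext p; simp only [Finset.mem_filter]; tauto
      have q3 : ((S.filter fun p => p.1 c = true).filter fun p => p.2 c = false)
          = S.filter fun p => p.1 c = true ∧ p.2 c = false := by
        ext p; simp only [Finset.mem_filter]; tauto
      have q4 : ((S.filter fun p => p.1 c = true).filter fun p => p.2 c = true)
          = S.filter fun p => p.1 c = true ∧ p.2 c = true := by
        ext p; simp only [Finset.mem_filter]; tauto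
      rw [e1] at t1
      rw [e2, q1, q2] at t2
      rw [e3, q3, q4] at t3
      omega
    have h00 : (S.filter fun p => p.1 c = false ∧ p.2 c = false) =
        ((A0 ×ˢ A0).filter fun p => hdistX p.1 p.2 = 1) := by
      ext p
      simp only [hS, hA0, Finset.mem_filter, Finset.mem_product]
      tauto
    have h11 : (S.filter fun p => p.1 c = true ∧ p.2 c = true) =
        ((A1 ×ˢ A1).filter fun p => hdistX p.1 p.2 = 1) := by
      ext p
      simp only [hS, hA1, Finset.mem_filter, Finset.mem_product]
      tauto
    -- cross bounds
    have cross01a : (S.filter fun p => p.1 c = false ∧ p.2 c = true).card ≤ A0.card := by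
      apply Finset.card_le_card_of_injOn Prod.fst
      · intro p hp
        simp only [hS, Finset.mem_coe, Finset.mem_filter, Finset.mem_product] at hp
        exact Finset.mem_filter.mpr ⟨hp.1.1.1, hp.2.1⟩
      · intro p hp q hq hpq
        simp only [hS, Finset.mem_coe, Finset.mem_filter, Finset.mem_product] at hp hq
        have hcp : p.1 c ≠ p.2 c := by rw [hp.2.1, hp.2.2]; simp
        have hcq : q.1 c ≠ q.2 c := by rw [hq.2.1, hq.2.2]; simp
        have : p.2 = q.2 := by
          funext d
          by_cases hd : d = c
          · rw [hd, hp.2.2, hq.2.2]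
          · rw [← hdistX_eq_one_unique hp.1.2 hcp hd, ← hdistX_eq_one_unique hq.1.2 hcq hd, hpq]
        exact Prod.ext hpq this
    have cross10a : (S.filter fun p => p.1 c = true ∧ p.2 c = false).card ≤ A0.card := by
      apply Finset.card_le_card_of_injOn Prod.snd
      · intro p hp
        simp only [hS, Finset.mem_coe, Finset.mem_filter, Finset.mem_product] at hp
        exact Finset.mem_filter.mpr ⟨hp.1.1.2, hp.2.2⟩
      · intro p hp q hq hpq
        simp only [hS, Finset.mem_coe, Finset.mem_filter, Finset.mem_product] at hp hq
        have hcp : p.1 c ≠ p.2 c := by rw [hp.2.1, hp.2.2]; simp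
        have hcq : q.1 c ≠ q.2 c := by rw [hq.2.1, hq.2.2]; simp
        have : p.1 = q.1 := by
          funext d
          by_cases hd : d = c
          · rw [hd, hp.2.1, hq.2.1]
          · rw [hdistX_eq_one_unique hp.1.2 hcp hd, hdistX_eq_one_unique hq.1.2 hcq hd, hpq]
        exact Prod.ext this hpq
    have cross01b : (S.filter fun p => p.1 c = false ∧ p.2 c = true).card ≤ A1.card := by
      apply Finset.card_le_card_of_injOn Prod.snd
      · intro p hp
        simp only [hS, Finset.mem_coe, Finset.mem_filter, Finset.mem_product] at hp
        exact Finset.mem_filter.mpr ⟨hp.1.1.2, hp.2.2⟩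
      · intro p hp q hq hpq
        simp only [hS, Finset.mem_coe, Finset.mem_filter, Finset.mem_product] at hp hq
        have hcp : p.1 c ≠ p.2 c := by rw [hp.2.1, hp.2.2]; simp
        have hcq : q.1 c ≠ q.2 c := by rw [hq.2.1, hq.2.2]; simp
        have : p.1 = q.1 := by
          funext d
          by_cases hd : d = c
          · rw [hd, hp.2.1, hq.2.1]
          · rw [hdistX_eq_one_unique hp.1.2 hcp hd, hdistX_eq_one_unique hq.1.2 hcq hd, hpq]
        exact Prod.ext this hpq
    have cross10b : (S.filter fun p => p.1 c = true ∧ p.2 c = false).card ≤ A1.card := by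
      apply Finset.card_le_card_of_injOn Prod.fst
      · intro p hp
        simp only [hS, Finset.mem_coe, Finset.mem_filter, Finset.mem_product] at hp
        exact Finset.mem_filter.mpr ⟨hp.1.1.1, hp.2.1⟩
      · intro p hp q hq hpq
        simp only [hS, Finset.mem_coe, Finset.mem_filter, Finset.mem_product] at hp hq
        have hcp : p.1 c ≠ p.2 c := by rw [hp.2.1, hp.2.2]; simp
        have hcq : q.1 c ≠ q.2 c := by rw [hq.2.1, hq.2.2]; simp
        have : p.2 = q.2 := by
          funext d
          by_cases hd : d = c
          · rw [hd, hp.2.2, hq.2.2]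
          · rw [← hdistX_eq_one_unique hp.1.2 hcp hd, ← hdistX_eq_one_unique hq.1.2 hcq hd, hpq]
        exact Prod.ext hpq this
    -- put it together
    have ih0 := IH A0 hs0
    have ih1 := IH A1 hs1
    have ha0 : (1 : ℕ) ≤ A0.card := Finset.card_pos.mpr hne0
    have ha1 : (1 : ℕ) ≤ A1.card := Finset.card_pos.mpr hne1
    set M := min A0.card A1.card with hM
    have hfin : 2 * (A0.card : ℝ) * Real.logb 2 A0.card + 2 * (A1.card : ℝ) * Real.logb 2 A1.card
        + 2 * (M : ℝ) ≤ 2 * A.card * Real.logb 2 A.card := by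
      rw [← hcards]
      push_cast
      rcases le_total A0.card A1.card with h | h
      · have hk := key_ineq A0.card A1.card ha0 h
        have hMe : M = A0.card := min_eq_left h
        rw [hMe]
        linarith
      · have hk := key_ineq A1.card A0.card ha1 h
        have hMe : M = A1.card := min_eq_right h
        have hcomm : ((A1.card : ℝ) + A0.card) = ((A0.card : ℝ) + A1.card) := by ring
        rw [hcomm] at hk
        rw [hMe]
        linarith
    have hmin01 : (S.filter fun p => p.1 c = false ∧ p.2 c = true).card ≤ M :=
      le_min cross01a cross01b
    have hmin10 : (S.filter fun p => p.1 c = true ∧ p.2 c = false).card ≤ M :=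
      le_min cross10a cross10b
    have hOD0 : (S.filter fun p => p.1 c = false ∧ p.2 c = false).card = oDX A0 := by
      rw [h00]; rfl
    have hOD1 : (S.filter fun p => p.1 c = true ∧ p.2 c = true).card = oDX A1 := by
      rw [h11]; rfl
    have hstep : (oDX A : ℝ) ≤ (oDX A0 : ℝ) + oDX A1 + 2 * (M : ℝ) := by
      have : oDX A = S.card := rfl
      rw [this, hsplit, hOD0, hOD1]
      push_cast
      have c1 : ((S.filter fun p => p.1 c = false ∧ p.2 c = true).card : ℝ) ≤ (M : ℝ) := by
        exact_mod_cast hmin01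
      have c2 : ((S.filter fun p => p.1 c = true ∧ p.2 c = false).card : ℝ) ≤ (M : ℝ) := by
        exact_mod_cast hmin10
      linarith
    calc (oDX A : ℝ) ≤ (oDX A0 : ℝ) + oDX A1 + 2 * (M : ℝ) := hstep
      _ ≤ 2 * (A0.card : ℝ) * Real.logb 2 A0.card + 2 * (A1.card : ℝ) * Real.logb 2 A1.card
          + 2 * (M : ℝ) := by linarith
      _ ≤ 2 * A.card * Real.logb 2 A.card := hfin

/-- The set of tests in `F` differentiating the pair `{i, j}`. -/
def DsetX {α : Type*} [DecidableEq α] (F : Finset (Finset α)) (i j : α) : Finset (Finset α) :=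
  F.filter fun T => (T ∩ {i, j}).card = 1

/-- Projection of an item onto the coordinates `F \ R` (coordinates in `R` are zeroed out). -/
def projX {α : Type*} [DecidableEq α] (F R : Finset (Finset α)) (i : α) :
    {T // T ∈ F} → Bool :=
  fun T => if T.1 ∈ R then false else (if i ∈ T.1 then true else false)

lemma pair_inter_card {α : Type*} [DecidableEq α] {i j : α} (hij : i ≠ j) (T : Finset α) :
    (T ∩ {i, j}).card = 1 ↔ ¬ ((i ∈ T) ↔ (j ∈ T)) := by
  rw [Finset.inter_comm, ← Finset.filter_mem_eq_inter]
  by_cases hi : i ∈ T <;> by_cases hj : j ∈ T <;>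
    simp [Finset.filter_insert, Finset.filter_singleton, hi, hj, Finset.card_pair hij]

lemma card_filter_subtype {α : Type*} [DecidableEq α] (F s : Finset α) (hs : s ⊆ F) :
    (Finset.univ.filter fun T : {x // x ∈ F} => T.1 ∈ s).card = s.card := by
  apply Finset.card_bij (fun T _ => T.1)
  · intro T hT; exact (Finset.mem_filter.mp hT).2
  · intro T1 _ T2 _ h; exact Subtype.ext h
  · intro x hx; exact ⟨⟨x, hs hx⟩, Finset.mem_filter.mpr ⟨Finset.mem_univ _, hx⟩, rfl⟩

lemma hdist_projX {α : Type*} [DecidableEq α] (F R : Finset (Finset α)) {i j : α}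
    (hij : i ≠ j) :
    hdistX (projX F R i) (projX F R j) = ((DsetX F i j) \ R).card := by
  classical
  rw [hdistX]
  have hcong : (Finset.univ.filter fun T : {x // x ∈ F} => projX F R i T ≠ projX F R j T)
      = Finset.univ.filter fun T : {x // x ∈ F} => T.1 ∈ (DsetX F i j) \ R := by
    apply Finset.filter_congr
    intro T _
    by_cases hR : T.1 ∈ R
    · simp [projX, hR, Finset.mem_sdiff]
    · simp only [projX, if_neg hR, Finset.mem_sdiff, hR, not_false_iff, and_true,
        DsetX, Finset.mem_filter, T.2, true_and, pair_inter_card hij]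
      by_cases hi : i ∈ T.1 <;> by_cases hj : j ∈ T.1 <;> simp [hi, hj]
  rw [hcong]
  exact card_filter_subtype F _ (le_trans (Finset.sdiff_subset) (Finset.filter_subset _ _))


lemma double_count {γ δ : Type*} (s : Finset γ) (t : Finset δ)
    (Pr : γ → δ → Prop) [∀ c d, Decidable (Pr c d)] (k : ℕ)
    (hk : ∀ d ∈ t, (s.filter fun c => Pr c d).card = k) :
    ∑ c ∈ s, (t.filter fun d => Pr c d).card = t.card * k := by
  calc ∑ c ∈ s, (t.filter fun d => Pr c d).card
      = ∑ c ∈ s, ∑ d ∈ t, if Pr c d then 1 else 0 := by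
        refine Finset.sum_congr rfl fun c _ => ?_
        rw [Finset.card_filter]
    _ = ∑ d ∈ t, ∑ c ∈ s, if Pr c d then 1 else 0 := Finset.sum_comm
    _ = ∑ d ∈ t, (s.filter fun c => Pr c d).card := by
        refine Finset.sum_congr rfl fun d _ => ?_
        rw [Finset.card_filter]
    _ = ∑ d ∈ t, k := Finset.sum_congr rfl hk
    _ = t.card * k := by rw [Finset.sum_const, smul_eq_mul]

/-- for an optimal `r`-test set `𝒯*` of size `m*`, at most
`2·n·log₂ n·(m*)^(r−1)` item pairs are differentiated by exactly `r` tests of `𝒯*`. -/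
theorem stmt_2 {α : Type*} [Fintype α] [DecidableEq α]
    (r : ℕ) (hr : 1 ≤ r) (hn : 2 ≤ Fintype.card α)
    (𝒯 : Finset (Finset α))
    (hcompl : ∀ T₁ ∈ 𝒯, ∀ T₂ ∈ 𝒯, T₁ ≠ Finset.univ \ T₂)
    (Fstar : Finset (Finset α)) (hFstar : IsRTestSet r 𝒯 Fstar)
    (hopt : ∀ F : Finset (Finset α), IsRTestSet r 𝒯 F → Fstar.card ≤ F.card) :
    ((((itemPairs α).filter fun a => diffBy a Fstar = r).card : ℝ)) ≤
      2 * (Fintype.card α : ℝ) * Real.logb 2 (Fintype.card α) *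
        (Fstar.card : ℝ) ^ (r - 1) := by
  classical
  have hne : Nonempty α := Fintype.card_pos_iff.mp (by omega)
  set n := Fintype.card α with hn'
  set P := (itemPairs α).filter fun a => diffBy a Fstar = r with hP
  set Q := ((Finset.univ ×ˢ Finset.univ : Finset (α × α)).filter
      fun p => p.1 ≠ p.2 ∧ diffBy {p.1, p.2} Fstar = r) with hQ
  -- basic facts
  have hDQ : ∀ p ∈ Q, p.1 ≠ p.2 ∧ (DsetX Fstar p.1 p.2).card = r := by
    intro p hp
    exact (Finset.mem_filter.mp hp).2
  have hDlb : ∀ i j : α, i ≠ j → r ≤ (DsetX Fstar i j).card := by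
    intro i j hij
    exact hFstar.2 {i, j} (Finset.mem_filter.mpr ⟨Finset.mem_univ _, Finset.card_pair hij⟩)
  -- Step 1 : P.card ≤ Q.card
  have hPQ : P.card ≤ Q.card := by
    set f : Finset α → α × α := fun a =>
      if h : ∃ p : α × α, p.1 ≠ p.2 ∧ a = {p.1, p.2} then h.choose
      else (Classical.arbitrary α, Classical.arbitrary α) with hf
    have hspec : ∀ a ∈ P, (f a).1 ≠ (f a).2 ∧ a = {(f a).1, (f a).2} := by
      intro a ha
      have hcard : a.card = 2 :=
        (Finset.mem_filter.mp (Finset.mem_filter.mp ha).1).2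
      obtain ⟨x, y, hxy, hxyeq⟩ := Finset.card_eq_two.mp hcard
      have hex : ∃ p : α × α, p.1 ≠ p.2 ∧ a = {p.1, p.2} := ⟨(x, y), hxy, hxyeq⟩
      rw [hf]
      simp only [dif_pos hex]
      exact hex.choose_spec
    apply Finset.card_le_card_of_injOn f
    · intro a ha
      obtain ⟨h1, h2⟩ := hspec a ha
      refine Finset.mem_filter.mpr ⟨Finset.mem_product.mpr ⟨Finset.mem_univ _, Finset.mem_univ _⟩,
        h1, ?_⟩
      rw [← h2]
      exact (Finset.mem_filter.mp ha).2
    · intro a ha b hb hab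
      rw [(hspec a ha).2, (hspec b hb).2, hab]
  -- Step 2 : double counting
  have hsum : ∑ R ∈ Fstar.powersetCard (r - 1),
      (Q.filter fun p => R ⊆ DsetX Fstar p.1 p.2).card = Q.card * r := by
    apply double_count
    intro p hp
    have hfe : ((Fstar.powersetCard (r - 1)).filter fun R => R ⊆ DsetX Fstar p.1 p.2)
        = (DsetX Fstar p.1 p.2).powersetCard (r - 1) := by
      ext R
      simp only [Finset.mem_filter, Finset.mem_powersetCard]
      constructor
      · rintro ⟨⟨_, hc⟩, hsub⟩; exact ⟨hsub, hc⟩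
      · rintro ⟨hsub, hc⟩
        exact ⟨⟨le_trans hsub (Finset.filter_subset _ _), hc⟩, hsub⟩
    rw [hfe, Finset.card_powersetCard, (hDQ p hp).2]
    rw [← Nat.choose_symm (Nat.sub_le r 1)]
    have : r - (r - 1) = 1 := by omega
    rw [this, Nat.choose_one_right]
  -- Step 3 : per-R bound
  have hper : ∀ R ∈ Fstar.powersetCard (r - 1),
      ((Q.filter fun p => R ⊆ DsetX Fstar p.1 p.2).card : ℝ) ≤
        2 * (n : ℝ) * Real.logb 2 n := by
    intro R hR
    obtain ⟨hRsub, hRcard⟩ := Finset.mem_powersetCard.mp hR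
    set A := Finset.univ.image (projX Fstar R) with hA
    have hinj : Function.Injective (projX Fstar R) := by
      intro i j hijeq
      by_contra hij
      have h1 : r ≤ (DsetX Fstar i j).card := hDlb i j hij
      have h2 : 1 ≤ ((DsetX Fstar i j) \ R).card := by
        have := Finset.le_card_sdiff R (DsetX Fstar i j)
        omega
      rw [← hdist_projX Fstar R hij, hijeq, hdistX_self] at h2
      omega
    have hcount : (Q.filter fun p => R ⊆ DsetX Fstar p.1 p.2).card ≤ oDX A := by
      apply Finset.card_le_card_of_injOn
        (fun p => (projX Fstar R p.1, projX Fstar R p.2))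
      · intro p hp
        have hp1 := hDQ p (Finset.mem_filter.mp hp).1
        have hRD := (Finset.mem_filter.mp hp).2
        refine Finset.mem_filter.mpr ⟨Finset.mem_product.mpr
          ⟨Finset.mem_image_of_mem _ (Finset.mem_univ _),
           Finset.mem_image_of_mem _ (Finset.mem_univ _)⟩, ?_⟩
        rw [hdist_projX Fstar R hp1.1, Finset.card_sdiff_of_subset hRD, hp1.2, hRcard]
        omega
      · intro p _ q _ hpq
        have h1 : projX Fstar R p.1 = projX Fstar R q.1 := congrArg Prod.fst hpq
        have h2 : projX Fstar R p.2 = projX Fstar R q.2 := congrArg Prod.snd hpq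
        exact Prod.ext (hinj h1) (hinj h2)
    have hAn : A.card ≤ n := le_trans (Finset.card_image_le) (by rw [Finset.card_univ])
    have hA1 : 1 ≤ A.card :=
      Finset.card_pos.mpr (Finset.Nonempty.image Finset.univ_nonempty _)
    have hhyp := hyper A
    have l1 : Real.logb 2 (A.card : ℝ) ≤ Real.logb 2 (n : ℝ) :=
      Real.logb_le_logb_of_le one_lt_two (by exact_mod_cast hA1) (by exact_mod_cast hAn)
    have l0 : (0 : ℝ) ≤ Real.logb 2 (n : ℝ) :=
      Real.logb_nonneg one_lt_two (by exact_mod_cast le_trans (by norm_num) hn)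
    have ha' : (1 : ℝ) ≤ (A.card : ℝ) := by exact_mod_cast hA1
    have hn2 : (A.card : ℝ) ≤ (n : ℝ) := by exact_mod_cast hAn
    have hc' : ((Q.filter fun p => R ⊆ DsetX Fstar p.1 p.2).card : ℝ) ≤ (oDX A : ℝ) := by
      exact_mod_cast hcount
    nlinarith [Real.logb_nonneg one_lt_two ha']
  -- Step 4 : assemble
  have hcardR : (Fstar.powersetCard (r - 1)).card = Fstar.card.choose (r - 1) :=
    Finset.card_powersetCard _ _
  have hB : (0 : ℝ) ≤ 2 * (n : ℝ) * Real.logb 2 n := by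
    have l0 : (0 : ℝ) ≤ Real.logb 2 (n : ℝ) :=
      Real.logb_nonneg one_lt_two (by exact_mod_cast le_trans (by norm_num) hn)
    positivity
  have hqr : (Q.card : ℝ) * r ≤ (Fstar.card.choose (r - 1) : ℝ) *
      (2 * (n : ℝ) * Real.logb 2 n) := by
    calc (Q.card : ℝ) * r = ((Q.card * r : ℕ) : ℝ) := by push_cast; ring
      _ = ((∑ R ∈ Fstar.powersetCard (r - 1),
            (Q.filter fun p => R ⊆ DsetX Fstar p.1 p.2).card : ℕ) : ℝ) := by rw [hsum]
      _ = ∑ R ∈ Fstar.powersetCard (r - 1),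
            ((Q.filter fun p => R ⊆ DsetX Fstar p.1 p.2).card : ℝ) := by push_cast; rfl
      _ ≤ ∑ _R ∈ Fstar.powersetCard (r - 1), (2 * (n : ℝ) * Real.logb 2 n) :=
          Finset.sum_le_sum hper
      _ = (Fstar.card.choose (r - 1) : ℝ) * (2 * (n : ℝ) * Real.logb 2 n) := by
          rw [Finset.sum_const, hcardR, nsmul_eq_mul]
  have hchoose : (Fstar.card.choose (r - 1) : ℝ) ≤ (Fstar.card : ℝ) ^ (r - 1) := by
    exact_mod_cast Nat.choose_le_pow Fstar.card (r - 1)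
  have hr' : (1 : ℝ) ≤ (r : ℝ) := by exact_mod_cast hr
  have hQ0 : (0 : ℝ) ≤ (Q.card : ℝ) := by positivity
  have hPQ' : ((P.card : ℝ)) ≤ (Q.card : ℝ) := by exact_mod_cast hPQ
  have hQle : (Q.card : ℝ) ≤ (Q.card : ℝ) * r := le_mul_of_one_le_right hQ0 hr'
  have hfinal : (Q.card : ℝ) * r ≤ 2 * (n : ℝ) * Real.logb 2 n * (Fstar.card : ℝ) ^ (r - 1) := by
    calc (Q.card : ℝ) * r ≤ (Fstar.card.choose (r - 1) : ℝ) * (2 * (n : ℝ) * Real.logb 2 n) :=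
        hqr
      _ ≤ (Fstar.card : ℝ) ^ (r - 1) * (2 * (n : ℝ) * Real.logb 2 n) :=
        mul_le_mul_of_nonneg_right hchoose hB
      _ = 2 * (n : ℝ) * Real.logb 2 n * (Fstar.card : ℝ) ^ (r - 1) := by ring
  calc ((P.card : ℝ)) ≤ (Q.card : ℝ) := hPQ'
    _ ≤ (Q.card : ℝ) * r := hQle
    _ ≤ 2 * (n : ℝ) * Real.logb 2 n * (Fstar.card : ℝ) ^ (r - 1) := hfinal
end

section
/- Let 𝒯* ⊆ 𝒯 be an optimal r-test set with m* = |𝒯*| ≥ 2, and let #_B ≥ 1 be the number of item pairs differentiated by exactly r tests of 𝒯*. Then any run of SGA returns an r-test set of size at most (ln #₀ − (1/(r+1))·ln(#₀/#_B) + (r/(r+1))·ln(r+1) + 1)·m* + 1. -/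
set_option maxHeartbeats 4000000
set_option linter.unusedSectionVars false


open Finset

namespace Stmt3Aux
variable {α : Type*} [Fintype α] [DecidableEq α]

lemma diffBy_mono (a : Finset α) {F G : Finset (Finset α)} (h : F ⊆ G) :
    diffBy a F ≤ diffBy a G :=
  Finset.card_le_card (Finset.filter_subset_filter _ h)

lemma diffBy_union_le (a : Finset α) (F G : Finset (Finset α)) :
    diffBy a (F ∪ G) ≤ diffBy a F + diffBy a G := by
  classical
  unfold diffBy
  rw [Finset.filter_union]
  exact Finset.card_union_le _ _

lemma dmeasure_anti (r : ℕ) {F G : Finset (Finset α)} (h : F ⊆ G) :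
    dmeasure r G ≤ dmeasure r F :=
  Finset.sum_le_sum fun a _ => Nat.sub_le_sub_left (diffBy_mono a h) r

/-- the decrease caused by inserting `T` -/
def dec (r : ℕ) (taken : Finset (Finset α)) (T : Finset α) : ℕ :=
  ((itemPairs α).filter fun a => (T ∩ a).card = 1 ∧ diffBy a taken < r).card

lemma diffBy_insert (a T : Finset α) (taken : Finset (Finset α)) (hT : T ∉ taken) :
    diffBy a (insert T taken) = diffBy a taken + (if (T ∩ a).card = 1 then 1 else 0) := by
  unfold diffBy
  rw [Finset.filter_insert]
  by_cases h : (T ∩ a).card = 1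
  · rw [if_pos h, if_pos h,
      Finset.card_insert_of_notMem (fun hc => hT (Finset.mem_of_mem_filter _ hc))]
  · rw [if_neg h, if_neg h, Nat.add_zero]

lemma dmeasure_insert (r : ℕ) (T : Finset α) (taken : Finset (Finset α)) (hT : T ∉ taken) :
    dmeasure r (insert T taken) + dec r taken T = dmeasure r taken := by
  unfold dmeasure dec
  rw [Finset.card_filter, ← Finset.sum_add_distrib]
  refine Finset.sum_congr rfl fun a _ => ?_
  rw [diffBy_insert a T taken hT]
  split_ifs <;> omega

lemma sum_dec (r : ℕ) (taken S : Finset (Finset α)) :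
    ∑ T ∈ S, dec r taken T
      = ∑ a ∈ itemPairs α, if diffBy a taken < r then diffBy a S else 0 := by
  have hdec : ∀ T, dec r taken T = ∑ a ∈ itemPairs α,
      if (T ∩ a).card = 1 ∧ diffBy a taken < r then 1 else 0 :=
    fun T => Finset.card_filter _ _
  simp only [hdec]
  rw [Finset.sum_comm]
  refine Finset.sum_congr rfl fun a _ => ?_
  split_ifs with h
  · simp only [h, and_true]
    exact (Finset.card_filter _ S).symm
  · exact Finset.sum_eq_zero fun T _ => by simp [h]

lemma key (r : ℕ) (𝒯 Fstar : Finset (Finset α)) (hFstar : IsRTestSet r 𝒯 Fstar)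
    (B : ℕ) (hBdef : B = ((itemPairs α).filter fun a => diffBy a Fstar = r).card)
    (taken : Finset (Finset α)) (hpos : 0 < dmeasure r taken) :
    ∃ T₀ ∈ 𝒯, T₀ ∉ taken ∧
      dmeasure r (insert T₀ taken) + dec r taken T₀ = dmeasure r taken ∧
      dmeasure r taken ≤ Fstar.card * dec r taken T₀ ∧
      (r + 1) * dmeasure r taken ≤ r * (Fstar.card * dec r taken T₀) + r * B := by
  classical
  set S := Fstar \ taken with hS
  have hSsub : Fstar ⊆ S ∪ taken := by
    rw [hS, Finset.sdiff_union_self_eq_union]; exact Finset.subset_union_left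
  have hSne : S.Nonempty := by
    rw [hS, Finset.sdiff_nonempty]
    intro hsub
    have h0 : dmeasure r Fstar = 0 :=
      Finset.sum_eq_zero fun a ha => Nat.sub_eq_zero_of_le (hFstar.2 a ha)
    have := dmeasure_anti r hsub
    omega
  have hsum1 : dmeasure r taken ≤ ∑ T ∈ S, dec r taken T := by
    rw [sum_dec]
    refine Finset.sum_le_sum fun a ha => ?_
    have hra : r ≤ diffBy a Fstar := hFstar.2 a ha
    have hsub2 : diffBy a Fstar ≤ diffBy a S + diffBy a taken :=
      le_trans (diffBy_mono a hSsub) (diffBy_union_le a S taken)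
    split_ifs with h <;> omega
  have hsum2 : (r + 1) * dmeasure r taken ≤ r * (∑ T ∈ S, dec r taken T) + r * B := by
    have hBsum : B = ∑ a ∈ itemPairs α, (if diffBy a Fstar = r then 1 else 0) := by
      rw [hBdef, Finset.card_filter]
    rw [sum_dec, hBsum, Finset.mul_sum, Finset.mul_sum, ← Finset.sum_add_distrib,
      dmeasure, Finset.mul_sum]
    refine Finset.sum_le_sum fun a ha => ?_
    have hra : r ≤ diffBy a Fstar := hFstar.2 a ha
    have hsub2 : diffBy a Fstar ≤ diffBy a S + diffBy a taken :=
      le_trans (diffBy_mono a hSsub) (diffBy_union_le a S taken)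
    set x := diffBy a Fstar
    set b := diffBy a taken
    set y := diffBy a S
    split_ifs with h1 h2
    · -- b < r, x = r : y ≥ r - b, goal (r+1)*(r-b) ≤ r*y + r*1
      have hy : r - b ≤ y := by omega
      have : (r+1)*(r-b) = r*(r-b) + (r-b) := by ring
      rw [this]
      have h3 : r*(r-b) ≤ r*y := Nat.mul_le_mul_left r hy
      omega
    · -- b < r, x ≥ r+1 : y ≥ r+1-b
      have hy : (r - b) + 1 ≤ y := by omega
      have h3 : r*((r-b)+1) ≤ r*y := Nat.mul_le_mul_left r hy
      have : (r+1)*(r-b) + (r - b) ≤ r*(r-b) + r + (r-b) := by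
        have hub : r - b ≤ r := Nat.sub_le r b
        nlinarith
      have h4 : r*((r-b)+1) = r*(r-b) + r := by ring
      have h5 : (r+1)*(r-b) = r*(r-b) + (r-b) := by ring
      omega
    all_goals
      have hb0 : r - b = 0 := by omega
      simp [hb0]
  obtain ⟨T₀, hT₀S, hmax⟩ := Finset.exists_max_image S (dec r taken) hSne
  have hcardS : S.card ≤ Fstar.card := Finset.card_le_card (Finset.sdiff_subset)
  have hsle : ∑ T ∈ S, dec r taken T ≤ Fstar.card * dec r taken T₀ := by
    calc ∑ T ∈ S, dec r taken T ≤ S.card • dec r taken T₀ :=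
          Finset.sum_le_card_nsmul S _ _ hmax
      _ = S.card * dec r taken T₀ := by simp
      _ ≤ Fstar.card * dec r taken T₀ := Nat.mul_le_mul_right _ hcardS
  have hT₀m : T₀ ∈ Fstar := (Finset.mem_sdiff.mp (hS ▸ hT₀S)).1
  have hT₀n : T₀ ∉ taken := (Finset.mem_sdiff.mp (hS ▸ hT₀S)).2
  refine ⟨T₀, hFstar.1 hT₀m, hT₀n, dmeasure_insert r T₀ taken hT₀n, le_trans hsum1 hsle, ?_⟩
  calc (r+1) * dmeasure r taken ≤ r * (∑ T ∈ S, dec r taken T) + r * B := hsum2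
    _ ≤ r * (Fstar.card * dec r taken T₀) + r * B := by
        exact Nat.add_le_add_right (Nat.mul_le_mul_left r hsle) _

end Stmt3Aux

/-- with `𝒯*` an optimal `r`-test set of size `m* ≥ 2` and `#_B ≥ 1` the
number of pairs differentiated by exactly `r` tests of `𝒯*`, any SGA run has length at most
`(ln #₀ − (1/(r+1))·ln(#₀/#_B) + (r/(r+1))·ln(r+1) + 1)·m* + 1`. -/
theorem stmt_3 {α : Type*} [Fintype α] [DecidableEq α]
    (r : ℕ) (hr : 1 ≤ r) (hn : 2 ≤ Fintype.card α)
    (𝒯 Fstar : Finset (Finset α))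
    (hFstar : IsRTestSet r 𝒯 Fstar)
    (hopt : ∀ F : Finset (Finset α), IsRTestSet r 𝒯 F → Fstar.card ≤ F.card)
    (hm : 2 ≤ Fstar.card)
    (B : ℕ) (hBdef : B = ((itemPairs α).filter fun a => diffBy a Fstar = r).card)
    (hB : 1 ≤ B)
    (N0 : ℝ)
    (hN0 : N0 = (r : ℝ) * (Fintype.card α) * ((Fintype.card α : ℝ) - 1) / 2)
    (L : List (Finset α)) (hrun : SGARun r 𝒯 L) :
    (L.length : ℝ) ≤
      (Real.log N0 - (1 / ((r : ℝ) + 1)) * Real.log (N0 / (B : ℝ))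
          + ((r : ℝ) / ((r : ℝ) + 1)) * Real.log ((r : ℝ) + 1) + 1) * (Fstar.card : ℝ)
        + 1 := by
  classical
  set n := L.length with hn'
  set D : ℕ → ℕ := fun i => dmeasure r (L.take i).toFinset with hDdef
  set m := Fstar.card with hmdef
  -- basic facts
  have hDn : D n = 0 := by
    show dmeasure r (L.take L.length).toFinset = 0
    rw [List.take_length]; exact hrun.done
  have hDpos : ∀ i < n, 1 ≤ D i := fun i hi => hrun.pos i hi
  -- the combinatorial step
  have hstep : ∀ i < n, ∃ c : ℕ, D (i+1) + c ≤ D i ∧ D i ≤ m * c ∧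
      (r+1) * D i ≤ r * (m * c) + r * B := by
    intro i hi
    obtain ⟨T₀, hT₀𝒯, hT₀n, heq, h1, h2⟩ :=
      Stmt3Aux.key r 𝒯 Fstar hFstar B hBdef (L.take i).toFinset (hrun.pos i hi)
    refine ⟨Stmt3Aux.dec r (L.take i).toFinset T₀, ?_, h1, h2⟩
    have hg := hrun.greedy ⟨i, hi⟩ T₀ hT₀𝒯 hT₀n
    have htake : (L.take (i+1)).toFinset = insert (L.get ⟨i, hi⟩) (L.take i).toFinset := by
      ext x
      simp only [List.mem_toFinset, Finset.mem_insert, List.get_eq_getElem]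
      rw [List.take_succ, List.getElem?_eq_getElem hi, List.mem_append]
      simp only [Option.toList_some, List.mem_singleton]
      tauto
    have hle : dmeasure r (L.take (i+1)).toFinset ≤
        dmeasure r (insert T₀ (L.take i).toFinset) := by
      rw [htake]; exact hg
    simp only [hDdef]
    omega
  -- real constants
  have hr1 : (1:ℝ) ≤ (r:ℝ) := by exact_mod_cast hr
  have hm2 : (2:ℝ) ≤ (m:ℝ) := by exact_mod_cast hm
  have hmpos : (0:ℝ) < (m:ℝ) := by linarith
  have hrpos : (0:ℝ) < (r:ℝ) := by linarith
  have hrmpos : (0:ℝ) < (r:ℝ) * m := mul_pos hrpos hmpos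
  have hr1m : (r:ℝ) + 1 ≤ (r:ℝ) * m := by nlinarith
  have hBpos : (0:ℝ) < (B:ℝ) := by exact_mod_cast hB
  -- D 0 and N0
  have hpairs : (itemPairs α).card = (Fintype.card α).choose 2 := by
    have : itemPairs α = Finset.univ.powersetCard 2 := by
      ext a; simp [itemPairs, Finset.mem_powersetCard]
    rw [this, Finset.card_powersetCard, Finset.card_univ]
  have hD0 : D 0 = r * (itemPairs α).card := by
    show dmeasure r (L.take 0).toFinset = _
    simp only [List.take_zero, List.toFinset_nil]
    unfold dmeasure diffBy
    simp [Finset.sum_const, mul_comm]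
  have hD0N : (D 0 : ℝ) = N0 := by
    rw [hD0, hN0]
    push_cast [hpairs, Nat.cast_choose_two]
    ring
  have hBD0 : B ≤ D 0 := by
    rw [hD0, hBdef]
    calc ((itemPairs α).filter fun a => diffBy a Fstar = r).card
        ≤ (itemPairs α).card := Finset.card_le_card (Finset.filter_subset _ _)
      _ ≤ r * (itemPairs α).card := Nat.le_mul_of_pos_left _ hr
  have hBN0 : (B:ℝ) ≤ N0 := by rw [← hD0N]; exact_mod_cast hBD0
  have hN0pos : (0:ℝ) < N0 := lt_of_lt_of_le hBpos hBN0
  -- phase split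
  have hex : ∃ i, D i ≤ B := ⟨n, by omega⟩
  obtain ⟨k, hkn, hDk, hDlt⟩ : ∃ k, k ≤ n ∧ D k ≤ B ∧ ∀ i < k, B < D i :=
    ⟨Nat.find hex, Nat.find_le (by omega), Nat.find_spec hex,
      fun i hi => Nat.lt_of_not_le (Nat.find_min hex hi)⟩
  -- real step inequalities
  set Ev : ℕ → ℝ := fun j => ((r:ℝ)+1) * (D j : ℝ) - (r:ℝ) * B with hEv
  set q1 : ℝ := 1 - ((r:ℝ)+1)/((r:ℝ)*m) with hq1
  set q2 : ℝ := 1 - 1/(m:ℝ) with hq2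
  have hq1nn : 0 ≤ q1 := by
    rw [hq1, sub_nonneg, div_le_one hrmpos]; exact hr1m
  have hq2nn : 0 ≤ q2 := by
    rw [hq2, sub_nonneg, div_le_one hmpos]; linarith
  have hstepE : ∀ i < n, Ev (i+1) ≤ q1 * Ev i := by
    intro i hi
    obtain ⟨c, h1, h2, h3⟩ := hstep i hi
    have hc1 : (D (i+1):ℝ) + (c:ℝ) ≤ (D i:ℝ) := by exact_mod_cast h1
    have hc3 : ((r:ℝ)+1) * (D i:ℝ) ≤ (r:ℝ)*((m:ℝ)*(c:ℝ)) + (r:ℝ)*(B:ℝ) := by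
      exact_mod_cast h3
    have hq1eq : q1 = ((r:ℝ)*m - ((r:ℝ)+1))/((r:ℝ)*m) := by
      rw [hq1]; field_simp
    rw [hq1eq, div_mul_eq_mul_div, le_div_iff₀ hrmpos]
    show (((r:ℝ)+1) * (D (i+1) : ℝ) - (r:ℝ) * B) * ((r:ℝ)*m) ≤
      ((r:ℝ)*m - ((r:ℝ)+1)) * (((r:ℝ)+1) * (D i : ℝ) - (r:ℝ) * B)
    nlinarith [mul_le_mul_of_nonneg_left hc1 (le_of_lt (mul_pos hrmpos (by linarith : (0:ℝ) < (r:ℝ)+1))),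
      mul_le_mul_of_nonneg_left hc3 (by linarith : (0:ℝ) ≤ (r:ℝ)+1)]
  have hstepD : ∀ i < n, (D (i+1) : ℝ) ≤ q2 * D i := by
    intro i hi
    obtain ⟨c, h1, h2, _⟩ := hstep i hi
    have hc1 : (D (i+1):ℝ) + (c:ℝ) ≤ (D i:ℝ) := by exact_mod_cast h1
    have hc2 : (D i:ℝ) ≤ (m:ℝ)*(c:ℝ) := by exact_mod_cast h2
    have hq2eq : q2 = ((m:ℝ) - 1)/(m:ℝ) := by rw [hq2]; field_simp
    rw [hq2eq, div_mul_eq_mul_div, le_div_iff₀ hmpos]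
    nlinarith [mul_le_mul_of_nonneg_left hc1 hmpos.le]
  -- decay of Ev
  have hEdecay : ∀ j ≤ n, Ev j ≤ Ev 0 * q1 ^ j := by
    intro j hj
    induction j with
    | zero => simp
    | succ i ih =>
      have hi : i < n := by omega
      calc Ev (i+1) ≤ q1 * Ev i := hstepE i hi
        _ ≤ q1 * (Ev 0 * q1 ^ i) := mul_le_mul_of_nonneg_left (ih (by omega)) hq1nn
        _ = Ev 0 * q1 ^ (i+1) := by ring
  -- decay of D in phase 2
  have hDdecay : ∀ t, k + t ≤ n → (D (k+t) : ℝ) ≤ (D k : ℝ) * q2 ^ t := by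
    intro t
    induction t with
    | zero => simp
    | succ s ih =>
      intro hs
      have hks : k + s < n := by omega
      have : (D (k+s+1) : ℝ) ≤ q2 * D (k+s) := hstepD (k+s) hks
      calc (D (k+(s+1)) : ℝ) = (D (k+s+1) : ℝ) := by ring_nf
        _ ≤ q2 * D (k+s) := this
        _ ≤ q2 * ((D k : ℝ) * q2 ^ s) := mul_le_mul_of_nonneg_left (ih (by omega)) hq2nn
        _ = (D k : ℝ) * q2 ^ (s+1) := by ring
  -- key constants
  set K1 : ℝ := ((r:ℝ)*m/((r:ℝ)+1)) * (Real.log (((r:ℝ)+1)*N0) - Real.log B) with hK1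
  set K2 : ℝ := (m:ℝ) * Real.log B with hK2
  have hlogB0 : 0 ≤ Real.log B := Real.log_nonneg (by exact_mod_cast hB)
  have hK1nn : 0 ≤ K1 := by
    rw [hK1]
    apply mul_nonneg (by positivity)
    rw [sub_nonneg]
    apply Real.log_le_log hBpos
    nlinarith
  have hK2nn : 0 ≤ K2 := by positivity
  -- Bound on k
  have hkbound : (k:ℝ) ≤ K1 + 1 := by
    rcases Nat.eq_zero_or_pos k with hk0 | hk0
    · rw [hk0]; push_cast; linarith
    · obtain ⟨j, hjk1⟩ : ∃ j, k = j + 1 := ⟨k - 1, by omega⟩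
      have hjk : j < k := by omega
      have hjn : j ≤ n := by omega
      have hDjB : (B:ℝ) < (D j : ℝ) := by exact_mod_cast hDlt j hjk
      have hEj : (B:ℝ) < Ev j := by
        rw [hEv]; push_cast; nlinarith
      have hE0le : Ev 0 ≤ ((r:ℝ)+1) * N0 := by
        rw [hEv]; push_cast; rw [hD0N]; nlinarith
      have hrho : q1 ≤ Real.exp (-(((r:ℝ)+1)/((r:ℝ)*m))) := by
        rw [hq1]
        have := Real.add_one_le_exp (-(((r:ℝ)+1)/((r:ℝ)*m)))
        linarith
      have hchain : (B:ℝ) < ((r:ℝ)+1) * N0 * Real.exp ((j:ℝ) * (-(((r:ℝ)+1)/((r:ℝ)*m)))) := by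
        have h1 : Ev j ≤ Ev 0 * q1 ^ j := hEdecay j hjn
        have h2 : Ev 0 * q1 ^ j ≤ (((r:ℝ)+1) * N0) * q1 ^ j :=
          mul_le_mul_of_nonneg_right hE0le (pow_nonneg hq1nn j)
        have h3 : q1 ^ j ≤ Real.exp (-(((r:ℝ)+1)/((r:ℝ)*m))) ^ j :=
          pow_le_pow_left₀ hq1nn hrho j
        have h4 : (((r:ℝ)+1) * N0) * q1 ^ j ≤ (((r:ℝ)+1)*N0) * Real.exp (-(((r:ℝ)+1)/((r:ℝ)*m))) ^ j :=
          mul_le_mul_of_nonneg_left h3 (by positivity)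
        have h5 : Real.exp (-(((r:ℝ)+1)/((r:ℝ)*m))) ^ j = Real.exp ((j:ℝ) * (-(((r:ℝ)+1)/((r:ℝ)*m)))) :=
          (Real.exp_nat_mul _ _).symm
        linarith [h5 ▸ h4]
      have hlog := Real.log_lt_log hBpos hchain
      rw [Real.log_mul (by positivity) (Real.exp_ne_zero _), Real.log_exp] at hlog
      have hjb : (((r:ℝ)+1)/((r:ℝ)*m)) * j < Real.log (((r:ℝ)+1)*N0) - Real.log B := by
        linarith
      have hjb2 : (j:ℝ) < K1 := by
        have hc : (0:ℝ) < ((r:ℝ)*m)/((r:ℝ)+1) := by positivity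
        have h := mul_lt_mul_of_pos_left hjb hc
        have heq : ((r:ℝ)*m)/((r:ℝ)+1) * ((((r:ℝ)+1)/((r:ℝ)*m)) * (j:ℝ)) = (j:ℝ) := by
          field_simp
        rw [heq] at h
        rw [hK1]; exact h
      have : (k:ℝ) = (j:ℝ) + 1 := by rw [hjk1]; push_cast; ring
      linarith
  -- Bound on n - k
  have hnbound : (n:ℝ) ≤ (k:ℝ) + K2 + 1 := by
    rcases Nat.lt_or_ge k n with hkn' | hkn'
    · set t := n - 1 - k with ht
      have htn : k + t = n - 1 := by omega
      have htn' : k + t ≤ n := by omega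
      have hD1 : (1:ℝ) ≤ (D (n-1) : ℝ) := by exact_mod_cast hDpos (n-1) (by omega)
      have hdec := hDdecay t htn'
      rw [htn] at hdec
      have hDkB : (D k : ℝ) ≤ B := by exact_mod_cast hDk
      have hrho2 : q2 ≤ Real.exp (-(1/(m:ℝ))) := by
        rw [hq2]
        have := Real.add_one_le_exp (-(1/(m:ℝ)))
        linarith
      have hchain2 : (1:ℝ) ≤ (B:ℝ) * Real.exp ((t:ℝ) * (-(1/(m:ℝ)))) := by
        have h3 : q2 ^ t ≤ Real.exp (-(1/(m:ℝ))) ^ t := pow_le_pow_left₀ hq2nn hrho2 t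
        have h5 : Real.exp (-(1/(m:ℝ))) ^ t = Real.exp ((t:ℝ) * (-(1/(m:ℝ)))) :=
          (Real.exp_nat_mul _ _).symm
        nlinarith [pow_nonneg hq2nn t, Real.exp_pos (-(1/(m:ℝ)) * t)]
      have hlog : (0:ℝ) ≤ Real.log B + (-(1/(m:ℝ)) * t) := by
        have := Real.log_le_log (by norm_num : (0:ℝ) < 1) hchain2
        rw [Real.log_one, Real.log_mul (by positivity) (Real.exp_ne_zero _), Real.log_exp] at this
        linarith
      have htb : (t:ℝ) ≤ K2 := by
        rw [hK2]
        rw [neg_mul] at hlog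
        have : (1/(m:ℝ)) * t ≤ Real.log B := by linarith
        rw [div_mul_eq_mul_div, one_mul] at this
        rw [div_le_iff₀ hmpos] at this
        nlinarith
      have hnkt : k + t + 1 = n := by omega
      have : (n:ℝ) = (k:ℝ) + (t:ℝ) + 1 := by
        rw [← hnkt]; push_cast; ring
      linarith
    · have : (n:ℝ) ≤ (k:ℝ) := by exact_mod_cast hkn'
      linarith
  -- final comparison
  have hfinal : K1 + K2 + (m:ℝ) + 1 =
      (Real.log N0 - (1 / ((r : ℝ) + 1)) * Real.log (N0 / (B : ℝ))
          + ((r : ℝ) / ((r : ℝ) + 1)) * Real.log ((r : ℝ) + 1) + 1) * (m : ℝ) + 1 := by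
    rw [hK1, hK2, Real.log_div hN0pos.ne' hBpos.ne',
      Real.log_mul (by positivity : ((r:ℝ)+1) ≠ 0) hN0pos.ne']
    field_simp
    ring
  rw [← hfinal]
  linarith
end

section
/- Let 𝒯* ⊆ 𝒯 be an r-test set with m* = |𝒯*|, let #_B be the number of item pairs with ⊥(a,𝒯*) = r, and let T̄ ⊆ 𝒯 be any partial family. Call an item pair a alive if ⊥(a,T̄) < r. Then ∑_{alive a} ⊥(a, 𝒯* \ T̄) ≥ ((r+1)/r)·#(T̄) − #_B, where ⊥(a, 𝒯* \ T̄) is the number of tests in 𝒯* not in T̄ that differentiate a. -/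
open Finset

/-- `∑_{alive a} ⊥(a, 𝒯* \ T̄) ≥ ((r+1)/r)·#(T̄) − #_B`, where a pair `a` is
alive if `⊥(a,T̄) < r`, and `#_B` is the number of pairs with `⊥(a,𝒯*) = r`. -/
theorem stmt_5 {α : Type*} [Fintype α] [DecidableEq α]
    (r : ℕ) (hr : 1 ≤ r) (hn : 2 ≤ Fintype.card α)
    (𝒯 Fstar : Finset (Finset α)) (hFstar : IsRTestSet r 𝒯 Fstar)
    (B : ℕ) (hBdef : B = ((itemPairs α).filter fun a => diffBy a Fstar = r).card)
    (Tbar : Finset (Finset α)) (hTbar : Tbar ⊆ 𝒯) :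
    (((r : ℝ) + 1) / (r : ℝ)) * (dmeasure r Tbar : ℝ) - (B : ℝ) ≤
      ∑ a ∈ (itemPairs α).filter (fun a => diffBy a Tbar < r),
        (diffBy a (Fstar \ Tbar) : ℝ) := by
  classical
  set A := (itemPairs α).filter (fun a => diffBy a Tbar < r) with hA
  -- dmeasure restricted to alive pairs
  have hdm : (dmeasure r Tbar : ℝ) = ∑ a ∈ A, ((r - diffBy a Tbar : ℕ) : ℝ) := by
    rw [dmeasure, Nat.cast_sum, hA]
    rw [Finset.sum_filter_of_ne]
    intro x _ hx
    have : r - diffBy x Tbar ≠ 0 := by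
      intro h; apply hx; simp [h]
    omega
  -- indicator sum bounded by B
  have hB : (∑ a ∈ A, (if diffBy a Fstar = r then (1:ℝ) else 0)) ≤ (B : ℝ) := by
    rw [Finset.sum_boole, hBdef]
    have hsub : A.filter (fun a => diffBy a Fstar = r) ⊆
        (itemPairs α).filter (fun a => diffBy a Fstar = r) := by
      intro x hx
      simp only [hA, Finset.mem_filter] at hx ⊢
      exact ⟨hx.1.1, hx.2⟩
    exact_mod_cast Finset.card_le_card hsub
  have key : ∀ a ∈ A,
      ((r : ℝ) + 1) / r * ((r - diffBy a Tbar : ℕ) : ℝ)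
        - (if diffBy a Fstar = r then (1:ℝ) else 0) ≤ (diffBy a (Fstar \ Tbar) : ℝ) := by
    intro a ha
    rw [hA, Finset.mem_filter] at ha
    obtain ⟨hamem, hd⟩ := ha
    have hDle : r ≤ diffBy a Fstar := hFstar.2 a hamem
    have hsplit : diffBy a Fstar ≤ diffBy a (Fstar \ Tbar) + diffBy a Tbar := by
      unfold diffBy
      have hsub : Fstar.filter (fun T => (T ∩ a).card = 1) ⊆
          (Fstar \ Tbar).filter (fun T => (T ∩ a).card = 1) ∪
            Tbar.filter (fun T => (T ∩ a).card = 1) := by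
        intro T hT
        rw [Finset.mem_filter] at hT
        rcases em (T ∈ Tbar) with h | h
        · exact Finset.mem_union_right _ (Finset.mem_filter.2 ⟨h, hT.2⟩)
        · exact Finset.mem_union_left _
            (Finset.mem_filter.2 ⟨Finset.mem_sdiff.2 ⟨hT.1, h⟩, hT.2⟩)
      calc _ ≤ _ := Finset.card_le_card hsub
        _ ≤ _ := Finset.card_union_le _ _
    set d := diffBy a Tbar
    set D := diffBy a Fstar
    set E := diffBy a (Fstar \ Tbar)
    have hr' : (0:ℝ) < r := by exact_mod_cast hr
    have hcast : ((r - d : ℕ) : ℝ) = (r : ℝ) - d := by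
      exact_mod_cast Nat.cast_sub hd.le
    rw [hcast, sub_le_iff_le_add, div_mul_eq_mul_div, div_le_iff₀ hr']
    have hd0 : (0:ℝ) ≤ d := Nat.cast_nonneg d
    by_cases h : D = r
    · simp only [if_pos h]
      have hE : (r : ℝ) ≤ (E : ℝ) + d := by exact_mod_cast hDle.trans hsplit
      nlinarith
    · simp only [if_neg h]
      have hD1 : r + 1 ≤ D := Nat.succ_le_of_lt (lt_of_le_of_ne hDle (Ne.symm h))
      have hE : (r : ℝ) + 1 ≤ (E : ℝ) + d := by exact_mod_cast hD1.trans hsplit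
      nlinarith
  calc (((r : ℝ) + 1) / r) * (dmeasure r Tbar : ℝ) - (B : ℝ)
      ≤ (∑ a ∈ A, ((r : ℝ) + 1) / r * ((r - diffBy a Tbar : ℕ) : ℝ))
          - ∑ a ∈ A, (if diffBy a Fstar = r then (1:ℝ) else 0) := by
        rw [hdm, Finset.mul_sum]
        exact sub_le_sub_left hB _
    _ = ∑ a ∈ A, (((r : ℝ) + 1) / r * ((r - diffBy a Tbar : ℕ) : ℝ)
          - (if diffBy a Fstar = r then (1:ℝ) else 0)) := by
        rw [Finset.sum_sub_distrib]
    _ ≤ ∑ a ∈ A, (diffBy a (Fstar \ Tbar) : ℝ) := Finset.sum_le_sum key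
end

section
/- Let 𝒯* ⊆ 𝒯 be an r-test set with m* = |𝒯*|, let #_B be the number of item pairs with ⊥(a,𝒯*) = r, and let T̄ ⊆ 𝒯 be a partial family with #(T̄) > 0. Then 𝒯* \ T̄ is nonempty and there exists a test T ∈ 𝒯* \ T̄ such that #(T, T̄) ≥ (1/m*)·(((r+1)/r)·#(T̄) − #_B). -/
open Finset

/-- if `#(T̄) > 0` then `𝒯* \ T̄` is nonempty and some `T ∈ 𝒯* \ T̄` has
`#(T,T̄) ≥ (1/m*)·(((r+1)/r)·#(T̄) − #_B)`, where `#(T,T̄) = #(T̄) − #(T̄ ∪ {T})`. -/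
theorem stmt_6 {α : Type*} [Fintype α] [DecidableEq α]
    (r : ℕ) (hr : 1 ≤ r) (hn : 2 ≤ Fintype.card α)
    (𝒯 Fstar : Finset (Finset α)) (hFstar : IsRTestSet r 𝒯 Fstar)
    (B : ℕ) (hBdef : B = ((itemPairs α).filter fun a => diffBy a Fstar = r).card)
    (Tbar : Finset (Finset α)) (hTbar : Tbar ⊆ 𝒯)
    (hpos : 0 < dmeasure r Tbar) :
    (Fstar \ Tbar).Nonempty ∧
      ∃ T ∈ Fstar \ Tbar,
        (1 / (Fstar.card : ℝ)) *
            ((((r : ℝ) + 1) / (r : ℝ)) * (dmeasure r Tbar : ℝ) - (B : ℝ)) ≤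
          (dmeasure r Tbar : ℝ) - (dmeasure r (insert T Tbar) : ℝ) := by
  classical
  set P := itemPairs α with hP
  set def' := P.filter (fun a => diffBy a Tbar < r) with hdef
  set cnt : Finset α → ℕ := fun a => ((Fstar \ Tbar).filter (fun T => (T ∩ a).card = 1)).card
    with hcnt
  -- per-pair lower bound on number of differentiating tests in Fstar \ Tbar
  have hcount : ∀ a, diffBy a Fstar ≤ cnt a + diffBy a Tbar := by
    intro a
    have hsub : Fstar.filter (fun T => (T ∩ a).card = 1) ⊆
        ((Fstar \ Tbar).filter (fun T => (T ∩ a).card = 1)) ∪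
          (Tbar.filter (fun T => (T ∩ a).card = 1)) := by
      rw [← filter_union]
      apply filter_subset_filter
      intro T hT
      by_cases h : T ∈ Tbar
      · exact mem_union_right _ h
      · exact mem_union_left _ (mem_sdiff.2 ⟨hT, h⟩)
    calc diffBy a Fstar ≤ _ := card_le_card hsub
      _ ≤ _ := card_union_le _ _
  -- def' is nonempty
  have hdefne : def'.Nonempty := by
    obtain ⟨a, ha, hlt⟩ : ∃ a ∈ P, diffBy a Tbar < r := by
      by_contra h
      push_neg at h
      have h0 : dmeasure r Tbar = 0 := by
        rw [dmeasure]
        exact Finset.sum_eq_zero (fun a ha => by have := h a ha; omega)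
      omega
    exact ⟨a, mem_filter.2 ⟨ha, hlt⟩⟩
  -- Fstar \ Tbar is nonempty
  have hne : (Fstar \ Tbar).Nonempty := by
    obtain ⟨a, ha⟩ := hdefne
    have haP := (mem_filter.1 ha).1
    have hlt := (mem_filter.1 ha).2
    have h1 := hFstar.2 a haP
    have h2 := hcount a
    have : 0 < cnt a := by omega
    rw [hcnt] at this
    simp only [card_pos] at this
    obtain ⟨T, hT⟩ := this
    exact ⟨T, (mem_filter.1 hT).1⟩
  -- gain function
  set g : Finset α → ℕ := fun T => (def'.filter (fun a => (T ∩ a).card = 1)).card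
    with hg
  -- gain lemma
  have hgain : ∀ T ∉ Tbar, dmeasure r (insert T Tbar) + g T = dmeasure r Tbar := by
    intro T hT
    have hdi : ∀ a : Finset α, diffBy a (insert T Tbar)
        = diffBy a Tbar + (if (T ∩ a).card = 1 then 1 else 0) := by
      intro a
      unfold diffBy
      rw [filter_insert]
      split_ifs with h
      · rw [card_insert_of_notMem (fun hmem => hT (mem_of_mem_filter T hmem))]
      · rfl
    have hgT : g T = ∑ a ∈ P, (if diffBy a Tbar < r ∧ (T ∩ a).card = 1 then 1 else 0) := by
      rw [hg, hdef]
      simp only [filter_filter, card_filter]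
    rw [dmeasure, dmeasure, hgT, ← Finset.sum_add_distrib]
    apply Finset.sum_congr rfl
    intro a _
    rw [hdi a]
    split_ifs <;> omega
  -- double counting
  have hswap : ∑ T ∈ Fstar \ Tbar, g T = ∑ a ∈ def', cnt a := by
    simp only [hg, hcnt, card_filter]
    exact Finset.sum_comm
  set S := ∑ T ∈ Fstar \ Tbar, g T with hS
  set B' := (def'.filter (fun a => diffBy a Fstar = r)).card with hB'
  set D := def'.card with hD
  set M := dmeasure r Tbar with hM
  -- M as a sum over def'
  have hMsum : M = ∑ a ∈ def', (r - diffBy a Tbar) := by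
    rw [hM, dmeasure, hdef]
    rw [Finset.sum_filter_of_ne]
    intro a _ h
    omega
  -- key counting inequality
  have hSB : M + D ≤ S + B' := by
    have hper : ∀ a ∈ def', (r - diffBy a Tbar) + 1
        ≤ cnt a + (if diffBy a Fstar = r then 1 else 0) := by
      intro a ha
      have haP := (mem_filter.1 ha).1
      have hlt := (mem_filter.1 ha).2
      have h1 := hFstar.2 a haP
      have h2 := hcount a
      split_ifs with h <;> omega
    calc M + D = ∑ a ∈ def', ((r - diffBy a Tbar) + 1) := by
          rw [hMsum, Finset.sum_add_distrib, Finset.sum_const, smul_eq_mul, mul_one]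
      _ ≤ ∑ a ∈ def', (cnt a + if diffBy a Fstar = r then 1 else 0) := Finset.sum_le_sum hper
      _ = S + B' := by rw [Finset.sum_add_distrib, hswap, hB', card_filter]
  have hMD : M ≤ r * D := by
    rw [hMsum, hD]
    calc ∑ a ∈ def', (r - diffBy a Tbar) ≤ ∑ a ∈ def', r :=
      Finset.sum_le_sum (fun a _ => Nat.sub_le _ _)
    _ = def'.card * r := by rw [Finset.sum_const, smul_eq_mul]
    _ = r * def'.card := Nat.mul_comm _ _
  have hB'B : B' ≤ B := by
    rw [hB', hBdef, hdef]
    apply card_le_card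
    rw [filter_filter]
    intro a ha
    simp only [mem_filter] at ha ⊢
    exact ⟨ha.1, ha.2.2⟩
  -- pick a maximizing test
  obtain ⟨T, hTmem, hTmax⟩ := Finset.exists_max_image (Fstar \ Tbar) g hne
  have hSK : S ≤ (Fstar \ Tbar).card * g T := by
    rw [hS]
    calc ∑ T' ∈ Fstar \ Tbar, g T' ≤ ∑ _T' ∈ Fstar \ Tbar, g T :=
      Finset.sum_le_sum (fun T' hT' => hTmax T' hT')
    _ = _ := by rw [Finset.sum_const, smul_eq_mul]
  have hK : (Fstar \ Tbar).card ≤ Fstar.card := card_le_card (sdiff_subset)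
  have hmpos : 0 < Fstar.card := by
    obtain ⟨T', hT'⟩ := hne
    exact card_pos.2 ⟨T', (mem_sdiff.1 hT').1⟩
  have hTnot : T ∉ Tbar := (mem_sdiff.1 hTmem).2
  have hgainT := hgain T hTnot
  refine ⟨hne, T, hTmem, ?_⟩
  -- move to ℝ
  have hrhs : (dmeasure r Tbar : ℝ) - (dmeasure r (insert T Tbar) : ℝ) = (g T : ℝ) := by
    have : (dmeasure r (insert T Tbar) : ℝ) + (g T : ℝ) = (M : ℝ) := by
      exact_mod_cast congrArg (Nat.cast (R := ℝ)) hgainT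
    rw [← hM] at *
    linarith
  rw [hrhs]
  have hr0 : (0 : ℝ) < r := by exact_mod_cast hr
  have hm0 : (0 : ℝ) < Fstar.card := by exact_mod_cast hmpos
  have c1 : (M : ℝ) + D ≤ S + B' := by exact_mod_cast hSB
  have c2 : (M : ℝ) ≤ r * D := by exact_mod_cast hMD
  have c3 : (B' : ℝ) ≤ B := by exact_mod_cast hB'B
  have c4 : (S : ℝ) ≤ (Fstar \ Tbar).card * g T := by exact_mod_cast hSK
  have c5 : ((Fstar \ Tbar).card : ℝ) ≤ Fstar.card := by exact_mod_cast hK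
  have c6 : (0 : ℝ) ≤ (g T : ℝ) := Nat.cast_nonneg _
  have hdiv : ((r : ℝ) + 1) / r * M ≤ (M : ℝ) + D := by
    rw [div_mul_eq_mul_div, div_le_iff₀ hr0]
    nlinarith
  have hX : ((r : ℝ) + 1) / r * M - B ≤ (Fstar.card : ℝ) * g T := by
    nlinarith
  rw [one_div, inv_mul_le_iff₀ hm0]
  linarith [mul_le_mul_of_nonneg_right c5 c6]
end
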